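/- Let 𝒜 be a Hom-finite triangulated k-category with Serre functor F. Then 𝒜 is a Calabi-Yau category if and only if there exists a natural isomorphism η^F : F∘[1] → [1]∘F such that (F, η^F) is a triangle functor and (F, η^F) is naturally isomorphic, as a triangle functor, to ([d], (−1)^d Id_{[d+1]}) for some integer d. -/

import Mathlib

open CategoryTheory CategoryTheory.Limits CategoryTheory.Pretriangulated

universe v u

namespace CYPaper

variable (k : Type u) [Field k]
variable (C : Type u) [Category.{v} C] [Preadditive C] [Linear k C]
  [HasZeroObject C] [HasShift C ℤ] [∀ n : ℤ, (shiftFunctor C n).Additive]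
  [Pretriangulated C]

/-- `X` is a `d`-th Calabi-Yau object: there is an isomorphism
`Hom(X,-) ≅ D Hom(-, X⟦d⟧)`, natural in the variable. -/
def IsCYObj (d : ℤ) (X : C) : Prop :=
  ¬ IsZero X ∧
    ∃ η : ∀ Z : C, (X ⟶ Z) ≃ₗ[k] Module.Dual k (Z ⟶ X⟦d⟧),
      ∀ {Z W : C} (f : Z ⟶ W) (u : X ⟶ Z) (w : W ⟶ X⟦d⟧),
        η W (u ≫ f) w = η Z u (f ≫ w)

variable {C}

/-- A biproduct decomposition `X ≅ A ⊕ B`, expressed without assuming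
the existence of biproducts. -/
def IsDecomp (X A B : C) : Prop :=
  ∃ (iA : A ⟶ X) (iB : B ⟶ X) (pA : X ⟶ A) (pB : X ⟶ B),
    iA ≫ pA = 𝟙 A ∧ iB ≫ pB = 𝟙 B ∧ iA ≫ pB = 0 ∧ iB ≫ pA = 0 ∧
      pA ≫ iA + pB ≫ iB = 𝟙 X

/-- A direct sum decomposition `X ≅ X₁ ⊕ ⋯ ⊕ X_r`. -/
def IsDirectSumDecomp (X : C) {r : ℕ} (Xs : Fin r → C) : Prop :=
  ∃ (ι : ∀ j, Xs j ⟶ X) (π : ∀ j, X ⟶ Xs j),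
    (∀ j, ι j ≫ π j = 𝟙 (Xs j)) ∧ (∀ j j', j ≠ j' → ι j ≫ π j' = 0) ∧
      (∑ j, π j ≫ ι j) = 𝟙 X

/-- An object is indecomposable if it is non-zero and admits no non-trivial
direct sum decomposition. -/
def Indec (X : C) : Prop :=
  ¬ IsZero X ∧ ∀ A B : C, IsDecomp X A B → IsZero A ∨ IsZero B

variable (C) in
/-- The category is Krull-Schmidt: Hom-finite and any indecomposable object has
local endomorphism ring. -/
def KrullSchmidt : Prop :=
  ∀ X : C, Indec X → IsLocalRing (End X)

/-- Auslander-Reiten triangle. -/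
def IsARTriangle (T : Triangle C) : Prop :=
  (T ∈ distTriang C) ∧ Indec T.obj₁ ∧ Indec T.obj₃ ∧ T.mor₃ ≠ 0 ∧
    ∀ (Z' : C) (t : Z' ⟶ T.obj₃),
      (¬ ∃ s : T.obj₃ ⟶ Z', s ≫ t = 𝟙 T.obj₃) → ∃ t' : Z' ⟶ T.obj₂, t = t' ≫ T.mor₂

variable (C) in
/-- A right Serre functor on a Hom-finite `k`-linear category. -/
structure RightSerre where
  F : C ⥤ C
  additive : F.Additive
  linear : F.Linear k
  η : ∀ A B : C, (A ⟶ B) ≃ₗ[k] Module.Dual k (B ⟶ F.obj A)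
  nat_right : ∀ {A B B' : C} (g : B ⟶ B') (u : A ⟶ B) (w : B' ⟶ F.obj A),
    η A B' (u ≫ g) w = η A B u (g ≫ w)
  nat_left : ∀ {A A' B : C} (f : A' ⟶ A) (u : A ⟶ B) (w : B ⟶ F.obj A'),
    η A' B (f ≫ u) w = η A B u (w ≫ F.map f)

variable (C) in
/-- A Serre functor: a right Serre functor which is an equivalence. -/
structure Serre extends RightSerre k C where
  isEquiv : F.IsEquivalence

/-- A minimal `d`-th Calabi-Yau object: a `d`-th CY object no proper direct
summand of which is a `d`-th CY object. -/
def IsMinCYObj (d : ℤ) (X : C) : Prop :=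
  IsCYObj k C d X ∧
    ∀ A B : C, IsDecomp X A B → ¬ IsZero B → ¬ IsCYObj k C d A

end CYPaper

namespace CYPaper

open CategoryTheory CategoryTheory.Limits CategoryTheory.Pretriangulated

variable {C : Type u} [Category.{v} C] [Preadditive C]
  [HasZeroObject C] [HasShift C ℤ] [∀ n : ℤ, (shiftFunctor C n).Additive]
  [Pretriangulated C]
variable {D : Type u} [Category.{v} D] [Preadditive D]
  [HasZeroObject D] [HasShift D ℤ] [∀ n : ℤ, (shiftFunctor D n).Additive]
  [Pretriangulated D]

/-- `(F, η)` is a triangle functor: `F` is additive, `η : F ∘ [1] ≅ [1] ∘ F`, and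
every distinguished triangle `X → Y → Z → X⟦1⟧` with third map `h` is sent to the
distinguished triangle with third map `F h ≫ η_X`. -/
def IsTriangleFunctor (F : C ⥤ D)
    (η : shiftFunctor C (1 : ℤ) ⋙ F ≅ F ⋙ shiftFunctor D (1 : ℤ)) : Prop :=
  F.Additive ∧
    ∀ T ∈ distTriang C,
      Triangle.mk (F.map T.mor₁) (F.map T.mor₂) (F.map T.mor₃ ≫ η.hom.app T.obj₁)
        ∈ distTriang D

end CYPaper

open CategoryTheory CategoryTheory.Limits CategoryTheory.Pretriangulated CYPaper

set_option linter.unusedSectionVars false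

namespace CYAux

variable {C : Type u} [Category.{v} C] [Preadditive C]
  [HasZeroObject C] [HasShift C ℤ] [∀ n : ℤ, (shiftFunctor C n).Additive]
  [Pretriangulated C]

noncomputable def etaOf (F : C ⥤ C) (d : ℤ) (ξ : F ≅ shiftFunctor C d) :
    shiftFunctor C (1 : ℤ) ⋙ F ≅ F ⋙ shiftFunctor C (1 : ℤ) :=
  NatIso.ofComponents
    (fun A => ξ.app (A⟦(1 : ℤ)⟧) ≪≫
      ⟨d.negOnePow • (shiftFunctorComm C 1 d).hom.app A,
       d.negOnePow • (shiftFunctorComm C 1 d).inv.app A,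
       by simp [Linear.units_smul_comp, Linear.comp_units_smul, smul_smul,
            Int.units_mul_self],
       by simp [Linear.units_smul_comp, Linear.comp_units_smul, smul_smul,
            Int.units_mul_self]⟩ ≪≫
      ((shiftFunctor C (1 : ℤ)).mapIso (ξ.app A)).symm)
    (by
      intro A B f
      dsimp
      rw [ξ.hom.naturality_assoc]
      have h1 := (shiftFunctorComm C 1 d).hom.naturality f
      dsimp at h1
      simp only [Linear.comp_units_smul, Linear.units_smul_comp, Category.assoc]
      congr 1
      rw [reassoc_of% h1, ← Functor.map_comp, ← Functor.map_comp, ← ξ.inv.naturality])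


lemma etaOf_hom_app (F : C ⥤ C) (d : ℤ) (ξ : F ≅ shiftFunctor C d) (A : C) :
    (etaOf F d ξ).hom.app A =
      ξ.hom.app (A⟦(1 : ℤ)⟧) ≫ (d.negOnePow • (shiftFunctorComm C 1 d).hom.app A) ≫
        (ξ.inv.app A)⟦(1 : ℤ)⟧' := by
  simp [etaOf]

/-- An iso rescaled by a sign. -/
@[simps]
def negOnePowIso {X Y : C} (d : ℤ) (e : X ≅ Y) : X ≅ Y where
  hom := d.negOnePow • e.hom
  inv := d.negOnePow • e.inv
  hom_inv_id := by
    simp [Linear.units_smul_comp, Linear.comp_units_smul, smul_smul, Int.units_mul_self]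
  inv_hom_id := by
    simp [Linear.units_smul_comp, Linear.comp_units_smul, smul_smul, Int.units_mul_self]

lemma etaOf_triangle (F : C ⥤ C) (d : ℤ) (ξ : F ≅ shiftFunctor C d)
    (T : Triangle C) (hT : T ∈ distTriang C) :
    Triangle.mk (F.map T.mor₁) (F.map T.mor₂)
        (F.map T.mor₃ ≫ (etaOf F d ξ).hom.app T.obj₁) ∈ distTriang C := by
  refine isomorphic_distinguished _ (Triangle.shift_distinguished T hT d) _ ?_
  refine Triangle.isoMk _ _ (negOnePowIso d (ξ.app T.obj₁)) (ξ.app T.obj₂)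
    (negOnePowIso d (ξ.app T.obj₃)) ?_ ?_ ?_
  · dsimp
    change F.map T.mor₁ ≫ ξ.hom.app T.obj₂ =
      (d.negOnePow • ξ.hom.app T.obj₁) ≫ (d.negOnePow • T.mor₁⟦d⟧')
    rw [Linear.units_smul_comp, Linear.comp_units_smul, smul_smul, Int.units_mul_self,
      one_smul, ξ.hom.naturality]
  · dsimp
    change F.map T.mor₂ ≫ (d.negOnePow • ξ.hom.app T.obj₃) =
      ξ.hom.app T.obj₂ ≫ (d.negOnePow • T.mor₂⟦d⟧')
    rw [Linear.comp_units_smul, Linear.comp_units_smul]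
    congr 1
    rw [ξ.hom.naturality]
  · dsimp
    change (F.map T.mor₃ ≫ (etaOf F d ξ).hom.app T.obj₁) ≫
        (d.negOnePow • ξ.hom.app T.obj₁)⟦(1 : ℤ)⟧' =
      (d.negOnePow • ξ.hom.app T.obj₃) ≫
        (d.negOnePow • T.mor₃⟦d⟧' ≫ (shiftFunctorComm C 1 d).hom.app T.obj₁)
    rw [etaOf_hom_app]
    simp only [Functor.map_units_smul, Linear.units_smul_comp, Linear.comp_units_smul,
      smul_smul, Int.units_mul_self, one_smul, Category.assoc]
    rw [← Functor.map_comp, Iso.inv_hom_id_app, CategoryTheory.Functor.map_id]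
    erw [Category.comp_id]
    rw [ξ.hom.naturality_assoc]

end CYAux


/-- Proposition 2.2, Keller; Van den Bergh. Let `𝒜` be a Hom-finite
triangulated `k`-category with Serre functor `F`. Then `𝒜` is a Calabi-Yau category
(i.e. `F ≅ [d]` for some integer `d`) if and only if there is a natural isomorphism
`η : F ∘ [1] ≅ [1] ∘ F` such that `(F, η)` is a triangle functor and `(F, η)` is
naturally isomorphic, as a triangle functor, to `([d], (-1)^d Id_{[d+1]})` for some
integer `d`. -/
theorem stmt_0 (k : Type u) [Field k] (C : Type u) [Category.{v} C] [Preadditive C]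
    [Linear k C] [HasZeroObject C] [HasShift C ℤ]
    [∀ n : ℤ, (shiftFunctor C n).Additive] [Pretriangulated C]
    [∀ X Y : C, FiniteDimensional k (X ⟶ Y)]
    (S : Serre k C) :
    (∃ d : ℤ, Nonempty (S.F ≅ shiftFunctor C d)) ↔
      ∃ η : shiftFunctor C (1 : ℤ) ⋙ S.F ≅ S.F ⋙ shiftFunctor C (1 : ℤ),
        IsTriangleFunctor S.F η ∧
        ∃ (d : ℤ) (ξ : S.F ≅ shiftFunctor C d),
          ∀ A : C,
            ξ.hom.app (A⟦(1 : ℤ)⟧) ≫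
                ((((-1 : ℤˣ) ^ d : ℤˣ) : ℤ) • (shiftFunctorComm C (1 : ℤ) d).hom.app A) =
              η.hom.app A ≫ (ξ.hom.app A)⟦(1 : ℤ)⟧' := by
  constructor
  · rintro ⟨d, ⟨ξ⟩⟩
    refine ⟨CYAux.etaOf S.F d ξ,
      ⟨S.additive, fun T hT => CYAux.etaOf_triangle S.F d ξ T hT⟩, d, ξ, fun A => ?_⟩
    rw [CYAux.etaOf_hom_app, Category.assoc, Category.assoc, ← Functor.map_comp,
      Iso.inv_hom_id_app, CategoryTheory.Functor.map_id]
    erw [Category.comp_id]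
    rfl
  · rintro ⟨η, hη, d, ξ, h⟩
    exact ⟨d, ⟨ξ⟩⟩
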